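/- Let A be a compact selfadjoint operator on a Hilbert space H with Rayleigh quotient R(u) = (Au,u)/(u,u), and let (V_h) be a family of finite-dimensional subspaces satisfying lim_{h→0} inf_{v ∈ V_h} ‖u − v‖ = 0 for all u ∈ H. Then for each fixed j, the j-th largest positive discrete eigenvalue λ⁺_j^{(h)} (defined via the max-min principle over subspaces of V_h) converges to the j-th largest positive eigenvalue λ⁺_j of A as h → 0. -/

import Mathlib

open Filter RealInnerProductSpace
lemma rayleigh_upper {H : Type*} [NormedAddCommGroup H] [InnerProductSpace ℝ H] [CompleteSpace H]
    (A : H →L[ℝ] H) (hA_sa : IsSelfAdjoint A)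
    (lam : ℕ → ℝ) (v : ℕ → H) (hv_on : Orthonormal ℝ v)
    (h_eig : ∀ k, A (v k) = lam k • v k) (h_anti : Antitone lam)
    (h_max : ∀ x : H, (∀ k, inner ℝ (v k) x = (0 : ℝ)) → inner ℝ (A x) x ≤ (0 : ℝ))
    (j : ℕ) (hlamj : 0 ≤ lam j)
    (u : H) (hu : ∀ k, k < j → inner ℝ (v k) u = (0 : ℝ)) :
    (inner ℝ (A u) u : ℝ) ≤ lam j * inner ℝ u u := by
  classical
  set S : Submodule ℝ H := Submodule.span ℝ (v '' Set.Ici j) with hS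
  set K : Submodule ℝ H := S.topologicalClosure with hK
  have hKc : IsClosed (K : Set H) := by rw [hK]; exact S.isClosed_topologicalClosure
  haveI : CompleteSpace K := hKc.completeSpace_coe
  have hvK : ∀ k, j ≤ k → v k ∈ K := fun k hk =>
    Submodule.le_topologicalClosure S (Submodule.subset_span ⟨k, hk, rfl⟩)
  have hker : ∀ k, k < j → ∀ y ∈ K, (inner ℝ (v k) y : ℝ) = 0 := by
    intro k hk
    have hle : K ≤ LinearMap.ker (innerSL ℝ (v k) : H →ₗ[ℝ] ℝ) := by
      apply Submodule.topologicalClosure_minimal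
      · rw [Submodule.span_le]
        rintro - ⟨m, hm, rfl⟩
        simp only [SetLike.mem_coe, LinearMap.mem_ker, ContinuousLinearMap.coe_coe,
          innerSL_apply_apply]
        have hm' : j ≤ m := hm
        exact hv_on.2 (by omega : k ≠ m)
      · exact ContinuousLinearMap.isClosed_ker _
    intro y hy
    simpa using hle hy
  have hAK : K ≤ Submodule.comap (A : H →ₗ[ℝ] H) K := by
    apply Submodule.topologicalClosure_minimal
    · rw [Submodule.span_le]
      rintro - ⟨m, hm, rfl⟩
      simp only [SetLike.mem_coe, Submodule.mem_comap, ContinuousLinearMap.coe_coe]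
      rw [h_eig m]
      exact Submodule.smul_mem _ _ (hvK m hm)
    · exact (hKc.preimage A.continuous)
  have hQspan : ∀ y ∈ S, (inner ℝ (A y) y : ℝ) ≤ lam j * inner ℝ y y := by
    intro y hy
    rw [hS, Set.image_eq_range] at hy
    rw [Finsupp.mem_span_range_iff_exists_finsupp] at hy
    obtain ⟨c, rfl⟩ := hy
    set v' : (Set.Ici j) → H := fun m => v m with hv'
    have hv'on : Orthonormal ℝ v' := hv_on.comp _ Subtype.coe_injective
    unfold Finsupp.sum
    have hA : A (∑ i ∈ c.support, c i • v' i) = ∑ i ∈ c.support, (c i * lam i) • v' i := by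
      rw [map_sum]
      refine Finset.sum_congr rfl fun i _ => ?_
      rw [map_smul, hv', h_eig, smul_smul]
    rw [hA]
    rw [hv'on.inner_sum (fun i => c i * lam i) c c.support,
      hv'on.inner_sum c c c.support, Finset.mul_sum]
    apply Finset.sum_le_sum
    intro i _
    simp only [starRingEnd_apply, star_trivial]
    have : lam i ≤ lam j := h_anti i.2
    nlinarith [sq_nonneg (c i)]
  have hQ : ∀ y ∈ K, (inner ℝ (A y) y : ℝ) ≤ lam j * inner ℝ y y := by
    have hcl : IsClosed {y : H | (inner ℝ (A y) y : ℝ) ≤ lam j * inner ℝ y y} :=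
      isClosed_le (Continuous.inner A.continuous continuous_id)
        (continuous_const.mul (Continuous.inner continuous_id continuous_id))
    intro y hy
    have hsub : (K : Set H) ⊆ {y : H | (inner ℝ (A y) y : ℝ) ≤ lam j * inner ℝ y y} := by
      rw [hK, Submodule.topologicalClosure_coe]
      exact closure_minimal (fun y hy => hQspan y hy) hcl
    exact hsub hy
  set s₀ : H := (K.orthogonalProjectionOnto u : H) with hs₀
  set w : H := u - s₀ with hw
  have hs₀K : s₀ ∈ K := (K.orthogonalProjectionOnto u).2
  have hwperp : w ∈ Kᗮ := K.sub_starProjection_mem_orthogonal u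
  have hvw : ∀ k, (inner ℝ (v k) w : ℝ) = 0 := by
    intro k
    rcases lt_or_ge k j with hk | hk
    · rw [hw, inner_sub_right, hu k hk, hker k hk s₀ hs₀K, sub_zero]
    · exact (Submodule.mem_orthogonal K w).1 hwperp (v k) (hvK k hk)
  have hAw : (inner ℝ (A w) w : ℝ) ≤ 0 := h_max w hvw
  have hAs₀K : A s₀ ∈ K := hAK hs₀K
  have hAs₀w : (inner ℝ (A s₀) w : ℝ) = 0 :=
    (Submodule.mem_orthogonal K w).1 hwperp (A s₀) hAs₀K
  have hs₀w : (inner ℝ s₀ w : ℝ) = 0 :=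
    (Submodule.mem_orthogonal K w).1 hwperp s₀ hs₀K
  have hsym := (ContinuousLinearMap.isSelfAdjoint_iff_isSymmetric.mp hA_sa)
  have hAws₀ : (inner ℝ (A w) s₀ : ℝ) = 0 := by
    have h1 : (inner ℝ (A w) s₀ : ℝ) = inner ℝ w (A s₀) := hsym w s₀
    rw [h1, real_inner_comm]
    exact hAs₀w
  have hexp : u = s₀ + w := by rw [hw]; abel
  have e1 : (inner ℝ (A u) u : ℝ) =
      inner ℝ (A s₀) s₀ + inner ℝ (A s₀) w + inner ℝ (A w) s₀ + inner ℝ (A w) w := by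
    rw [hexp]
    rw [map_add, inner_add_left, inner_add_right, inner_add_right]
    ring
  have e2 : (inner ℝ u u : ℝ) = inner ℝ s₀ s₀ + 2 * inner ℝ s₀ w + inner ℝ w w := by
    rw [hexp, inner_add_left, inner_add_right, inner_add_right, real_inner_comm w s₀]
    ring
  have h3 := hQ s₀ hs₀K
  have h4 : 0 ≤ lam j * inner ℝ w w := mul_nonneg hlamj real_inner_self_nonneg
  rw [e1, e2, hAs₀w, hAws₀, hs₀w]
  linarith
lemma exists_least_rayleigh {H : Type*} [NormedAddCommGroup H] [InnerProductSpace ℝ H]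
    (A : H →L[ℝ] H) (W : Submodule ℝ H) [FiniteDimensional ℝ W]
    (hW : ∃ x ∈ W, x ≠ (0 : H)) :
    ∃ s, s ∈ {q : ℝ | ∃ u ∈ W, u ≠ 0 ∧ q = inner ℝ (A u) u / inner ℝ u u} ∧
      IsLeast {q : ℝ | ∃ u ∈ W, u ≠ 0 ∧ q = inner ℝ (A u) u / inner ℝ u u} s := by
  obtain ⟨x, hxW, hx0⟩ := hW
  have hxW0 : (⟨x, hxW⟩ : W) ≠ 0 := by
    simp only [ne_eq, Submodule.mk_eq_zero]; exact hx0
  set x₀ : W := ‖x‖⁻¹ • ⟨x, hxW⟩ with hx₀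
  have hxnorm : ‖x‖ ≠ 0 := norm_ne_zero_iff.mpr hx0
  have hx₀mem : x₀ ∈ Metric.sphere (0 : W) 1 := by
    rw [mem_sphere_zero_iff_norm, hx₀, norm_smul]
    have : ‖(⟨x, hxW⟩ : W)‖ = ‖x‖ := rfl
    rw [this, norm_inv, norm_norm, inv_mul_cancel₀ hxnorm]
  have hf : Continuous fun y : W => (inner ℝ (A (y : H)) (y : H) : ℝ) :=
    (A.continuous.comp continuous_subtype_val).inner continuous_subtype_val
  obtain ⟨u₀, hu₀mem, hu₀min⟩ := (isCompact_sphere (0 : W) 1).exists_isMinOn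
    ⟨x₀, hx₀mem⟩ hf.continuousOn
  have hu₀norm : ‖u₀‖ = 1 := mem_sphere_zero_iff_norm.mp hu₀mem
  have hu₀ne : (u₀ : H) ≠ 0 := by
    intro h
    have : u₀ = 0 := by exact_mod_cast Subtype.ext h
    rw [this, norm_zero] at hu₀norm; norm_num at hu₀norm
  have hmem : (inner ℝ (A (u₀ : H)) (u₀ : H) : ℝ) ∈
      {q : ℝ | ∃ u ∈ W, u ≠ 0 ∧ q = inner ℝ (A u) u / inner ℝ u u} := by
    refine ⟨u₀, u₀.2, hu₀ne, ?_⟩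
    have : (inner ℝ (u₀ : H) (u₀ : H) : ℝ) = 1 := by
      rw [real_inner_self_eq_norm_sq]
      have : ‖(u₀ : H)‖ = ‖u₀‖ := rfl
      rw [this, hu₀norm]; norm_num
    rw [this, div_one]
  refine ⟨_, hmem, hmem, ?_⟩
  rintro q ⟨u, huW, hu0, rfl⟩
  have hun : ‖u‖ ≠ 0 := norm_ne_zero_iff.mpr hu0
  set y : W := ‖u‖⁻¹ • ⟨u, huW⟩ with hy
  have hymem : y ∈ Metric.sphere (0 : W) 1 := by
    rw [mem_sphere_zero_iff_norm, hy, norm_smul]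
    have : ‖(⟨u, huW⟩ : W)‖ = ‖u‖ := rfl
    rw [this, norm_inv, norm_norm, inv_mul_cancel₀ hun]
  have hle := hu₀min hymem
  have hyval : (y : H) = ‖u‖⁻¹ • u := rfl
  have hcalc : (inner ℝ (A (y : H)) (y : H) : ℝ) = inner ℝ (A u) u / inner ℝ u u := by
    rw [hyval, map_smul, inner_smul_left, inner_smul_right, real_inner_self_eq_norm_sq]
    simp only [starRingEnd_apply, star_trivial, smul_eq_mul]
    rw [pow_two]
    field_simp
  rw [← hcalc]
  exact hle
lemma galerkin_key {H : Type*} [NormedAddCommGroup H] [InnerProductSpace ℝ H]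
    (A : H →L[ℝ] H)
    (lam : ℕ → ℝ) (v : ℕ → H) (hv_on : Orthonormal ℝ v)
    (h_eig : ∀ k, A (v k) = lam k • v k) (h_anti : Antitone lam)
    (j : ℕ) (ε : ℝ) (hε : 0 < ε) (δ : ℝ) (hδ0 : 0 ≤ δ)
    (hη_half : ((j : ℝ) + 1) * δ ≤ 1 / 2)
    (hηB : 3 * (‖A‖ + |lam j| + ε) * (((j : ℝ) + 1) * δ) ≤ ε)
    (w : Fin (j + 1) → H) (hw : ∀ i : Fin (j + 1), ‖v (i : ℕ) - w i‖ < δ) :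
    (∀ a : Fin (j + 1) → ℝ,
      (lam j - ε) * inner ℝ (∑ i, a i • w i) (∑ i, a i • w i) ≤
        (inner ℝ (A (∑ i, a i • w i)) (∑ i, a i • w i) : ℝ)) ∧
      LinearIndependent ℝ w := by
  classical
  set v' : Fin (j + 1) → H := fun i => v i with hv'
  have hv'on : Orthonormal ℝ v' := hv_on.comp _ Fin.val_injective
  set η : ℝ := ((j : ℝ) + 1) * δ with hη
  have hη0 : 0 ≤ η := by positivity
  set C : ℝ := ‖A‖ with hC
  have hC0 : 0 ≤ C := norm_nonneg _
  -- basic facts for an arbitrary coefficient vector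
  have hfacts : ∀ a : Fin (j + 1) → ℝ,
      ‖(∑ i, a i • w i) - (∑ i, a i • v' i)‖ ≤ η * ‖∑ i, a i • v' i‖ := by
    intro a
    set u' : H := ∑ i, a i • v' i with hu'
    have hai : ∀ i, |a i| ≤ ‖u'‖ := by
      intro i
      have h1 : (inner ℝ (v' i) u' : ℝ) = a i := hv'on.inner_right_fintype a i
      have h2 : |(inner ℝ (v' i) u' : ℝ)| ≤ ‖v' i‖ * ‖u'‖ := abs_real_inner_le_norm _ _
      rw [h1, hv'on.1 i, one_mul] at h2
      exact h2
    have hdiff : (∑ i, a i • w i) - u' = ∑ i, a i • (w i - v' i) := by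
      rw [hu', ← Finset.sum_sub_distrib]
      exact Finset.sum_congr rfl fun i _ => (smul_sub _ _ _).symm
    rw [hdiff]
    calc ‖∑ i, a i • (w i - v' i)‖ ≤ ∑ i, ‖a i • (w i - v' i)‖ := norm_sum_le _ _
      _ ≤ ∑ _i : Fin (j + 1), ‖u'‖ * δ := by
          apply Finset.sum_le_sum
          intro i _
          rw [norm_smul, Real.norm_eq_abs]
          have h3 : ‖w i - v' i‖ ≤ δ := by
            rw [norm_sub_rev]; exact (hw i).le
          exact mul_le_mul (hai i) h3 (norm_nonneg _) (norm_nonneg _)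
      _ = η * ‖u'‖ := by
          rw [Finset.sum_const, Finset.card_univ, Fintype.card_fin, nsmul_eq_mul]
          push_cast; ring
  constructor
  · -- the quadratic form estimate
    intro a
    set u' : H := ∑ i, a i • v' i with hu'
    set d : H := (∑ i, a i • w i) - u' with hd
    have hud : (∑ i, a i • w i) = u' + d := by rw [hd]; abel
    set N : ℝ := ‖u'‖ with hN
    set D : ℝ := ‖d‖ with hD
    have hN0 : 0 ≤ N := norm_nonneg _
    have hD0 : 0 ≤ D := norm_nonneg _
    have hDle : D ≤ η * N := hfacts a
    -- eigenvalue lower bound on the pure part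
    have hAu' : A u' = ∑ i, (a i * lam i) • v' i := by
      rw [hu', map_sum]
      refine Finset.sum_congr rfl fun i _ => ?_
      rw [map_smul, hv', h_eig, smul_smul]
    have hinner1 : (inner ℝ (A u') u' : ℝ) = ∑ i, (a i * lam i) * a i := by
      rw [hAu', hu']
      simpa using hv'on.inner_sum (fun i => a i * lam i) a Finset.univ
    have hinner2 : (inner ℝ u' u' : ℝ) = ∑ i, a i * a i := by
      rw [hu']
      simpa using hv'on.inner_sum a a Finset.univ
    have hNsq : N ^ 2 = ∑ i, a i * a i := by
      rw [← hinner2, hN, real_inner_self_eq_norm_sq]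
    have hR : lam j * N ^ 2 ≤ (inner ℝ (A u') u' : ℝ) := by
      rw [hinner1, hNsq, Finset.mul_sum]
      apply Finset.sum_le_sum
      intro i _
      have h5 : lam j ≤ lam i := h_anti (Nat.lt_succ_iff.mp i.2)
      nlinarith [sq_nonneg (a i)]
    -- perturbation terms
    set P : ℝ := inner ℝ u' d + inner ℝ d u' + inner ℝ d d with hP
    set Q : ℝ := inner ℝ (A u') d + inner ℝ (A d) u' + inner ℝ (A d) d with hQ
    have habs1 : |(inner ℝ u' d : ℝ)| ≤ N * D := abs_real_inner_le_norm _ _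
    have habs2 : |(inner ℝ d u' : ℝ)| ≤ D * N := abs_real_inner_le_norm _ _
    have habs3 : (inner ℝ d d : ℝ) = D ^ 2 := by rw [real_inner_self_eq_norm_sq]
    have hAop : ∀ x y : H, |(inner ℝ (A x) y : ℝ)| ≤ C * ‖x‖ * ‖y‖ := by
      intro x y
      calc |(inner ℝ (A x) y : ℝ)| ≤ ‖A x‖ * ‖y‖ := abs_real_inner_le_norm _ _
        _ ≤ C * ‖x‖ * ‖y‖ := by
            apply mul_le_mul_of_nonneg_right _ (norm_nonneg _)
            exact A.le_opNorm x
    have habs4 : |(inner ℝ (A u') d : ℝ)| ≤ C * N * D := hAop u' d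
    have habs5 : |(inner ℝ (A d) u' : ℝ)| ≤ C * D * N := hAop d u'
    have habs6 : |(inner ℝ (A d) d : ℝ)| ≤ C * D * D := hAop d d
    have hPbd : |P| ≤ 2 * N * D + D ^ 2 := by
      rw [hP]
      calc |(inner ℝ u' d + inner ℝ d u' + inner ℝ d d : ℝ)|
          ≤ |(inner ℝ u' d : ℝ)| + |(inner ℝ d u' : ℝ)| + |(inner ℝ d d : ℝ)| := by
            exact (abs_add_le _ _).trans (by gcongr; exact abs_add_le _ _)
        _ ≤ N * D + D * N + D ^ 2 := by
            rw [habs3, abs_of_nonneg (sq_nonneg D)]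
            gcongr
        _ = 2 * N * D + D ^ 2 := by ring
    have hQbd : -(C * (2 * N * D + D ^ 2)) ≤ Q := by
      have : |Q| ≤ C * (2 * N * D + D ^ 2) := by
        rw [hQ]
        calc |(inner ℝ (A u') d + inner ℝ (A d) u' + inner ℝ (A d) d : ℝ)|
            ≤ |(inner ℝ (A u') d : ℝ)| + |(inner ℝ (A d) u' : ℝ)| + |(inner ℝ (A d) d : ℝ)| :=
              (abs_add_le _ _).trans (by gcongr; exact abs_add_le _ _)
          _ ≤ C * N * D + C * D * N + C * D * D := by gcongr
          _ = C * (2 * N * D + D ^ 2) := by ring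
      linarith [(abs_le.mp this).1]
    -- main expansion
    have hexp1 : (inner ℝ (A (∑ i, a i • w i)) (∑ i, a i • w i) : ℝ) =
        inner ℝ (A u') u' + Q := by
      simp only [hud, map_add, inner_add_left, inner_add_right]
      rw [hQ]; ring
    have hexp2 : (inner ℝ (∑ i, a i • w i) (∑ i, a i • w i) : ℝ) = N ^ 2 + P := by
      simp only [hud, inner_add_left, inner_add_right]
      rw [hP, hinner2, hNsq]; ring
    rw [hexp1, hexp2]
    set R : ℝ := (inner ℝ (A u') u' : ℝ) with hRR
    clear_value R P Q N D η C
    clear hexp1 hexp2 hinner1 hinner2 hNsq hAu' habs1 habs2 habs3 habs4 habs5 habs6 hRR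
      hP hQ hN hD hη hC hud hd hu' hfacts hw h_eig h_anti hv'on hv' hv_on
    -- arithmetic
    have hnn : (0:ℝ) ≤ 2 * N * D + D ^ 2 := by nlinarith [mul_nonneg hN0 hD0, sq_nonneg D]
    have hB0 : (0:ℝ) ≤ C + |lam j| + ε := by
      have := abs_nonneg (lam j); linarith
    have hPmul : (lam j - ε) * P ≤ (|lam j| + ε) * (2 * N * D + D ^ 2) := by
      calc (lam j - ε) * P ≤ |(lam j - ε) * P| := le_abs_self _
        _ = |lam j - ε| * |P| := abs_mul _ _
        _ ≤ (|lam j| + ε) * (2 * N * D + D ^ 2) := by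
            apply mul_le_mul _ hPbd (abs_nonneg _) (by positivity)
            calc |lam j - ε| ≤ |lam j| + |ε| := abs_sub _ _
              _ = |lam j| + ε := by rw [abs_of_pos hε]
    have h2 : 2 * N * D + D ^ 2 ≤ 3 * η * N ^ 2 := by
      have hD2 : D * D ≤ (η * N) * (η * N) := mul_le_mul hDle hDle hD0 (mul_nonneg hη0 hN0)
      have hND : N * D ≤ N * (η * N) := mul_le_mul_of_nonneg_left hDle hN0
      nlinarith [mul_le_mul_of_nonneg_right hη_half (mul_nonneg hη0 (mul_nonneg hN0 hN0))]
    have h3 : (C + |lam j| + ε) * (2 * N * D + D ^ 2) ≤ (C + |lam j| + ε) * (3 * η * N ^ 2) :=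
      mul_le_mul_of_nonneg_left h2 hB0
    have h4 : (C + |lam j| + ε) * (3 * η * N ^ 2) ≤ ε * N ^ 2 := by
      nlinarith [mul_le_mul_of_nonneg_right hηB (sq_nonneg N)]
    nlinarith [hR, hPmul, hQbd, h3, h4]
  · -- linear independence
    rw [Fintype.linearIndependent_iff]
    intro a ha
    set u' : H := ∑ i, a i • v' i with hu'
    have hd0 : ‖(∑ i, a i • w i) - u'‖ ≤ η * ‖u'‖ := hfacts a
    rw [ha, zero_sub, norm_neg] at hd0
    have hu'0 : ‖u'‖ = 0 := by
      have hmul : η * ‖u'‖ ≤ (1 / 2) * ‖u'‖ :=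
        mul_le_mul_of_nonneg_right hη_half (norm_nonneg _)
      have hnn := norm_nonneg u'
      linarith
    intro i
    have h1 : (inner ℝ (v' i) u' : ℝ) = a i := hv'on.inner_right_fintype a i
    rw [norm_eq_zero] at hu'0
    rw [hu'0, inner_zero_right] at h1
    exact h1.symm


/-- Convergence of Galerkin (discrete) positive eigenvalues: if the family of
finite-dimensional subspaces `V h` satisfies the approximation property, then
the `j`-th discrete positive eigenvalue (defined by the max-min principle over
subspaces of `V h`) converges to the `j`-th largest positive eigenvalue of the
compact selfadjoint operator `A` as `h → 0⁺`. -/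
theorem galerkin_eigenvalue_convergence
    {H : Type*} [NormedAddCommGroup H] [InnerProductSpace ℝ H] [CompleteSpace H]
    (A : H →L[ℝ] H) (hA_compact : IsCompactOperator A) (hA_sa : IsSelfAdjoint A)
    (lam : ℕ → ℝ) (v : ℕ → H)
    (hv_on : Orthonormal ℝ v)
    (h_eig : ∀ j, A (v j) = lam j • v j)
    (h_anti : Antitone lam)
    (h_pos : ∀ j, 0 < lam j)
    (h_max : ∀ x : H, (∀ j, inner ℝ (v j) x = (0 : ℝ)) → inner ℝ (A x) x ≤ (0 : ℝ))
    (V : ℝ → Submodule ℝ H) (hVfd : ∀ h, FiniteDimensional ℝ (V h))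
    (h_approx : ∀ u : H, ∀ ε > (0 : ℝ),
      ∀ᶠ h in nhdsWithin 0 (Set.Ioi (0 : ℝ)), ∃ w ∈ V h, ‖u - w‖ < ε)
    (j : ℕ) (lamd : ℝ → ℝ)
    (hlamd : ∀ h > (0 : ℝ), IsGreatest
      {s : ℝ | ∃ W : Submodule ℝ H, W ≤ V h ∧ Module.finrank ℝ W = j + 1 ∧
        IsLeast {q : ℝ | ∃ u ∈ W, u ≠ 0 ∧ q = inner ℝ (A u) u / inner ℝ u u} s}
      (lamd h)) :
    Tendsto lamd (nhdsWithin 0 (Set.Ioi (0 : ℝ))) (nhds (lam j)) := by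
  classical
  -- Upper bound: lamd h ≤ lam j for every h > 0
  have upper : ∀ h > (0 : ℝ), lamd h ≤ lam j := by
    intro h hh
    obtain ⟨hmem, hub⟩ := hlamd h hh
    obtain ⟨W, hWV, hWrank, hleast⟩ := hmem
    haveI := hVfd h
    haveI : FiniteDimensional ℝ W := Submodule.finiteDimensional_of_le hWV
    set L : W →ₗ[ℝ] (Fin j → ℝ) :=
      LinearMap.pi (fun i : Fin j => ((innerSL ℝ (v i)).toLinearMap).comp W.subtype) with hL
    have hker : LinearMap.ker L ≠ ⊥ := by
      intro hbot
      have hinj : Function.Injective L := LinearMap.ker_eq_bot.mp hbot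
      have hle := LinearMap.finrank_le_finrank_of_injective hinj
      rw [hWrank, Module.finrank_fin_fun] at hle
      omega
    obtain ⟨x, hxker, hx0⟩ := Submodule.exists_mem_ne_zero_of_ne_bot hker
    have hxL : L x = 0 := hxker
    have hxo : ∀ k, k < j → inner ℝ (v k) (x : H) = (0 : ℝ) := by
      intro k hk
      have h1 := congrFun hxL ⟨k, hk⟩
      simpa [hL] using h1
    have hx0' : (x : H) ≠ 0 := by
      intro hc
      exact hx0 (Subtype.ext hc)
    have hray := rayleigh_upper A hA_sa lam v hv_on h_eig h_anti h_max j (h_pos j).le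
      (x : H) hxo
    have hpos : (0 : ℝ) < inner ℝ (x : H) (x : H) := by
      rw [real_inner_self_eq_norm_sq]
      exact pow_pos (norm_pos_iff.mpr hx0') 2
    have hq : (inner ℝ (A (x : H)) (x : H) : ℝ) / inner ℝ (x : H) (x : H) ≤ lam j := by
      rw [div_le_iff₀ hpos]
      linarith [hray]
    have hle2 := hleast.2 ⟨(x : H), x.2, hx0', rfl⟩
    linarith
  -- Lower bound: eventually lam j - ε ≤ lamd h
  have lower : ∀ ε > (0 : ℝ), ∀ᶠ h in nhdsWithin 0 (Set.Ioi (0 : ℝ)),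
      lam j - ε ≤ lamd h := by
    intro ε hε
    obtain ⟨δ, hδ0, hηhalf, hηB⟩ : ∃ δ : ℝ, 0 < δ ∧ ((j : ℝ) + 1) * δ ≤ 1 / 2 ∧
        3 * (‖A‖ + |lam j| + ε) * (((j : ℝ) + 1) * δ) ≤ ε := by
      set B : ℝ := ‖A‖ + |lam j| + ε with hB
      have hB0 : 0 < 3 * B + 1 := by
        have h1 := norm_nonneg A
        have h2 := abs_nonneg (lam j)
        rw [hB]; linarith
      refine ⟨min (ε / (3 * B + 1)) (1 / 2) / ((j : ℝ) + 1), ?_, ?_, ?_⟩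
      · apply div_pos
        · exact lt_min (div_pos hε hB0) (by norm_num)
        · positivity
      · rw [mul_div_cancel₀ _ (by positivity : ((j : ℝ) + 1) ≠ 0)]
        exact min_le_right _ _
      · rw [mul_div_cancel₀ _ (by positivity : ((j : ℝ) + 1) ≠ 0)]
        have h1 : min (ε / (3 * B + 1)) (1 / 2) ≤ ε / (3 * B + 1) := min_le_left _ _
        have h2 : (0 : ℝ) ≤ 3 * B := by
          have h3 := norm_nonneg A
          have h4 := abs_nonneg (lam j)
          rw [hB]; linarith
        have h5 : 3 * B * min (ε / (3 * B + 1)) (1 / 2) ≤ 3 * B * (ε / (3 * B + 1)) :=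
          mul_le_mul_of_nonneg_left h1 h2
        have h6 : ε / (3 * B + 1) * (3 * B + 1) = ε := div_mul_cancel₀ _ (ne_of_gt hB0)
        have h7 : 0 ≤ ε / (3 * B + 1) := div_nonneg hε.le hB0.le
        nlinarith
    have hev : ∀ᶠ h in nhdsWithin 0 (Set.Ioi (0 : ℝ)),
        ∀ i : Fin (j + 1), ∃ w ∈ V h, ‖v (i : ℕ) - w‖ < δ :=
      eventually_all.mpr fun i => h_approx (v (i : ℕ)) δ hδ0
    filter_upwards [hev, eventually_mem_nhdsWithin] with h hap hh'
    have hh : (0 : ℝ) < h := hh'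
    choose w hwV hwn using hap
    obtain ⟨hquad, hlin⟩ := galerkin_key A lam v hv_on h_eig h_anti j ε hε δ hδ0.le
      hηhalf hηB w hwn
    set W : Submodule ℝ H := Submodule.span ℝ (Set.range w) with hWdef
    have hWle : W ≤ V h := by
      rw [hWdef, Submodule.span_le]
      rintro - ⟨i, rfl⟩
      exact hwV i
    have hWrank : Module.finrank ℝ W = j + 1 := by
      rw [hWdef, finrank_span_eq_card hlin, Fintype.card_fin]
    haveI : FiniteDimensional ℝ W := FiniteDimensional.span_of_finite ℝ (Set.finite_range w)
    have hWne : ∃ x ∈ W, x ≠ (0 : H) := by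
      refine ⟨w 0, Submodule.subset_span ⟨0, rfl⟩, ?_⟩
      exact hlin.ne_zero 0
    obtain ⟨s, hsmem, hsleast⟩ := exists_least_rayleigh A W hWne
    have hlb : lam j - ε ≤ s := by
      obtain ⟨u, huW, hu0, rfl⟩ := hsmem
      obtain ⟨a, ha⟩ := (Submodule.mem_span_range_iff_exists_fun ℝ).mp huW
      have hpos : (0 : ℝ) < inner ℝ u u := by
        rw [real_inner_self_eq_norm_sq]
        exact pow_pos (norm_pos_iff.mpr hu0) 2
      rw [le_div_iff₀ hpos]
      have h8 := hquad a
      rw [ha] at h8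
      exact h8
    have h9 := (hlamd h hh).2 ⟨W, hWle, hWrank, hsleast⟩
    linarith
  rw [Metric.tendsto_nhds]
  intro ε hε
  filter_upwards [lower (ε / 2) (by linarith), eventually_mem_nhdsWithin] with h hlow hh'
  have hup := upper h hh'
  rw [Real.dist_eq, abs_lt]
  constructor <;> linarith
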